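/- A pair (ρ̄, φ̄) with ρ̄ ∈ C¹([0,∞)), φ̄ ∈ C²([0,∞)) and ρ̄ > 0 is a classical solution of the stationary problem if and only if it satisfies the first-order problem: ρ̄(0) = ρ₋, ρ̄(x) → ρ₊ as x → +∞, φ̄(x) = F(ρ̄(x)) + φ₊ for all x ≥ 0, and for all x > 0, ρ̄'(x) = −√(G(ρ̄(x)))/F'(ρ̄(x)) in the case φ₋ > φ₊ (respectively ρ̄'(x) = +√(G(ρ̄(x)))/F'(ρ̄(x)) in the case φ₋ < φ₊). -/

import Mathlib

open MeasureTheory Set Filter Topology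

noncomputable section

/-- `F(s) = ∫_{ρ₊}^s p'(τ)/(μ τ) dτ`. -/
def Ffun (p : ℝ → ℝ) (μ ρp s : ℝ) : ℝ :=
  ∫ τ in ρp..s, deriv p τ / (μ * τ)

/-- `H(s) = b F(s) + b φ₊ - a s`. -/
def Hfun (p : ℝ → ℝ) (μ a b ρp φp s : ℝ) : ℝ :=
  b * Ffun p μ ρp s + b * φp - a * s

/-- `G(s) = ∫_{ρ₊}^s 2 F'(τ) H(τ) dτ`. -/
def Gfun (p : ℝ → ℝ) (μ a b ρp φp s : ℝ) : ℝ :=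
  ∫ τ in ρp..s, 2 * (deriv p τ / (μ * τ)) * Hfun p μ a b ρp φp τ

/-- The structural condition `φ₋ - φ₊ + ∫₀^{ρ₊} p'(s)/(μ s) ds > 0`. -/
def CondPlus (p : ℝ → ℝ) (μ ρp φp φm : ℝ) : Prop :=
  ¬ IntegrableOn (fun s => deriv p s / (μ * s)) (Set.Ioo 0 ρp) ∨
    0 < φm - φp + ∫ s in Set.Ioo 0 ρp, deriv p s / (μ * s)

section Aux
variable {p : ℝ → ℝ} {μ a b ρp φp : ℝ}

lemma f_contOn (hμ : 0 < μ) (hp3 : ContDiffOn ℝ 3 p (Set.Ioi 0)) :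
    ContinuousOn (fun τ => deriv p τ / (μ * τ)) (Set.Ioi 0) := by
  have h1 : ContinuousOn (deriv p) (Set.Ioi 0) :=
    (hp3.deriv_of_isOpen (m := 2) isOpen_Ioi (by norm_num)).continuousOn
  exact h1.div (continuousOn_const.mul continuousOn_id) (fun τ hτ =>
    (mul_pos hμ hτ).ne')


lemma uIcc_subset_Ioi {u v : ℝ} (hu : 0 < u) (hv : 0 < v) : Set.uIcc u v ⊆ Set.Ioi 0 := by
  intro τ hτ
  rcases Set.mem_uIcc.1 hτ with h | h
  · exact lt_of_lt_of_le hu h.1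
  · exact lt_of_lt_of_le hv h.1

lemma hasDerivAt_F (hμ : 0 < μ) (hp3 : ContDiffOn ℝ 3 p (Set.Ioi 0)) (hρp : 0 < ρp)
    {s : ℝ} (hs : 0 < s) :
    HasDerivAt (Ffun p μ ρp) (deriv p s / (μ * s)) s := by
  have hc := f_contOn hμ hp3
  have hci : ContinuousAt (fun τ => deriv p τ / (μ * τ)) s :=
    hc.continuousAt (Ioi_mem_nhds hs)
  exact intervalIntegral.integral_hasDerivAt_right
    ((hc.mono (uIcc_subset_Ioi hρp hs)).intervalIntegrable)
    (hc.stronglyMeasurableAtFilter isOpen_Ioi s hs) hci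

lemma fpos (hμ : 0 < μ) (ha : 0 < a) (hb : 0 < b)
    (hp' : ∀ ρ : ℝ, 0 < ρ → a * μ / b * ρ < deriv p ρ) {s : ℝ} (hs : 0 < s) :
    a / b < deriv p s / (μ * s) := by
  have h := hp' s hs
  rw [div_lt_div_iff₀ hb (mul_pos hμ hs)]
  rw [div_mul_eq_mul_div, div_lt_iff₀ hb] at h
  nlinarith

lemma fpos' (hμ : 0 < μ) (ha : 0 < a) (hb : 0 < b)
    (hp' : ∀ ρ : ℝ, 0 < ρ → a * μ / b * ρ < deriv p ρ) {s : ℝ} (hs : 0 < s) :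
    0 < deriv p s / (μ * s) :=
  lt_trans (div_pos ha hb) (fpos hμ ha hb hp' hs)

lemma F_mono (hμ : 0 < μ) (ha : 0 < a) (hb : 0 < b) (hp3 : ContDiffOn ℝ 3 p (Set.Ioi 0))
    (hp' : ∀ ρ : ℝ, 0 < ρ → a * μ / b * ρ < deriv p ρ) (hρp : 0 < ρp) :
    StrictMonoOn (Ffun p μ ρp) (Set.Ioi 0) := by
  apply strictMonoOn_of_deriv_pos (convex_Ioi 0)
  · exact fun s hs => ((hasDerivAt_F hμ hp3 hρp hs).continuousAt).continuousWithinAt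
  · intro s hs
    rw [interior_Ioi] at hs
    rw [(hasDerivAt_F hμ hp3 hρp hs).deriv]
    exact fpos' hμ ha hb hp' hs

lemma F_rhop (p : ℝ → ℝ) (μ ρp : ℝ) : Ffun p μ ρp ρp = 0 := by
  simp [Ffun]


lemma hasDerivAt_H (hμ : 0 < μ) (hp3 : ContDiffOn ℝ 3 p (Set.Ioi 0)) (hρp : 0 < ρp)
    {s : ℝ} (hs : 0 < s) :
    HasDerivAt (Hfun p μ a b ρp φp) (b * (deriv p s / (μ * s)) - a) s := by
  have h1 : HasDerivAt (fun s => b * Ffun p μ ρp s + b * φp)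
      (b * (deriv p s / (μ * s))) s :=
    (((hasDerivAt_F hμ hp3 hρp hs)).const_mul b).add_const _
  have h2 : HasDerivAt (fun s : ℝ => a * s) a s := by
    simpa using (hasDerivAt_id s).const_mul a
  exact h1.sub h2

lemma H_rhop (hcomp : a * ρp = b * φp) : Hfun p μ a b ρp φp ρp = 0 := by
  simp [Hfun, F_rhop]; linarith

lemma H_mono (hμ : 0 < μ) (ha : 0 < a) (hb : 0 < b) (hp3 : ContDiffOn ℝ 3 p (Set.Ioi 0))
    (hp' : ∀ ρ : ℝ, 0 < ρ → a * μ / b * ρ < deriv p ρ) (hρp : 0 < ρp) :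
    StrictMonoOn (Hfun p μ a b ρp φp) (Set.Ioi 0) := by
  apply strictMonoOn_of_deriv_pos (convex_Ioi 0)
  · exact fun s hs => ((hasDerivAt_H hμ hp3 hρp hs).continuousAt).continuousWithinAt
  · intro s hs
    rw [interior_Ioi] at hs
    rw [(hasDerivAt_H hμ hp3 hρp hs).deriv]
    have h := hp' s hs
    have hμs : 0 < μ * s := mul_pos hμ hs
    rw [sub_pos, ← mul_div_assoc, lt_div_iff₀ hμs]
    rw [div_mul_eq_mul_div, div_lt_iff₀ hb] at h
    nlinarith

lemma g_contOn (hμ : 0 < μ) (hp3 : ContDiffOn ℝ 3 p (Set.Ioi 0)) (hρp : 0 < ρp) :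
    ContinuousOn (fun τ => 2 * (deriv p τ / (μ * τ)) * Hfun p μ a b ρp φp τ) (Set.Ioi 0) := by
  have hH : ContinuousOn (Hfun p μ a b ρp φp) (Set.Ioi 0) :=
    fun s hs => ((hasDerivAt_H hμ hp3 hρp hs).continuousAt).continuousWithinAt
  exact (continuousOn_const.mul (f_contOn hμ hp3)).mul hH

lemma hasDerivAt_G (hμ : 0 < μ) (hp3 : ContDiffOn ℝ 3 p (Set.Ioi 0)) (hρp : 0 < ρp)
    {s : ℝ} (hs : 0 < s) :
    HasDerivAt (Gfun p μ a b ρp φp)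
      (2 * (deriv p s / (μ * s)) * Hfun p μ a b ρp φp s) s := by
  have hc := g_contOn (a := a) (b := b) (φp := φp) hμ hp3 hρp
  have hci : ContinuousAt (fun τ => 2 * (deriv p τ / (μ * τ)) * Hfun p μ a b ρp φp τ) s :=
    hc.continuousAt (Ioi_mem_nhds hs)
  exact intervalIntegral.integral_hasDerivAt_right
    ((hc.mono (uIcc_subset_Ioi hρp hs)).intervalIntegrable)
    (hc.stronglyMeasurableAtFilter isOpen_Ioi s hs) hci

lemma G_rhop (p : ℝ → ℝ) (μ a b ρp φp : ℝ) : Gfun p μ a b ρp φp ρp = 0 := by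
  simp [Gfun]

lemma G_pos (hμ : 0 < μ) (ha : 0 < a) (hb : 0 < b) (hp3 : ContDiffOn ℝ 3 p (Set.Ioi 0))
    (hp' : ∀ ρ : ℝ, 0 < ρ → a * μ / b * ρ < deriv p ρ) (hρp : 0 < ρp)
    (hcomp : a * ρp = b * φp) {s : ℝ} (hs : 0 < s) (hsne : s ≠ ρp) :
    0 < Gfun p μ a b ρp φp s := by
  have hc := g_contOn (a := a) (b := b) (φp := φp) hμ hp3 hρp
  have hHm := H_mono (φp := φp) hμ ha hb hp3 hp' hρp
  have hint : IntervalIntegrable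
      (fun τ => 2 * (deriv p τ / (μ * τ)) * Hfun p μ a b ρp φp τ) volume ρp s :=
    (hc.mono (uIcc_subset_Ioi hρp hs)).intervalIntegrable
  rcases lt_or_gt_of_ne hsne with h | h
  · -- s < ρp : G s = - ∫ s..ρp, integrand < 0 there
    have key : 0 < ∫ τ in s..ρp, -(2 * (deriv p τ / (μ * τ)) * Hfun p μ a b ρp φp τ) := by
      apply intervalIntegral.intervalIntegral_pos_of_pos_on
      · exact ((hc.mono (uIcc_subset_Ioi hs hρp)).neg).intervalIntegrable
      · intro τ hτ
        have hτ0 : 0 < τ := lt_trans hs hτ.1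
        have hHneg : Hfun p μ a b ρp φp τ < 0 := by
          have := hHm (Set.mem_Ioi.2 hτ0) (Set.mem_Ioi.2 hρp) hτ.2
          rwa [H_rhop hcomp] at this
        have hf := fpos' hμ ha hb hp' hτ0
        nlinarith
      · exact h
    rw [intervalIntegral.integral_neg] at key
    have : (∫ τ in s..ρp, 2 * (deriv p τ / (μ * τ)) * Hfun p μ a b ρp φp τ) < 0 := by
      linarith
    unfold Gfun
    rw [intervalIntegral.integral_symm s ρp]; linarith
  · -- ρp < s
    unfold Gfun
    apply intervalIntegral.intervalIntegral_pos_of_pos_on hint _ h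
    intro τ hτ
    have hτ0 : 0 < τ := lt_trans hρp hτ.1
    have hHpos : 0 < Hfun p μ a b ρp φp τ := by
      have := hHm (Set.mem_Ioi.2 hρp) (Set.mem_Ioi.2 hτ0) hτ.1
      rwa [H_rhop hcomp] at this
    have hf := fpos' hμ ha hb hp' hτ0
    nlinarith


lemma ivt_pos_left {g : ℝ → ℝ} {s t : ℝ} (hst : s ≤ t) (hcont : ContinuousOn g (Set.Icc s t))
    (hnv : ∀ x ∈ Set.Icc s t, g x ≠ 0) (ht : 0 < g t) : 0 < g s := by
  rcases lt_trichotomy (g s) 0 with h | h | h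
  · obtain ⟨c, hc, hc0⟩ := intermediate_value_Icc hst hcont
      (show (0:ℝ) ∈ Set.Icc (g s) (g t) from ⟨h.le, ht.le⟩)
    exact absurd hc0 (hnv c hc)
  · exact absurd h (hnv s ⟨le_rfl, hst⟩)
  · exact h

lemma ivt_pos_right {g : ℝ → ℝ} {s t : ℝ} (hst : s ≤ t) (hcont : ContinuousOn g (Set.Icc s t))
    (hnv : ∀ x ∈ Set.Icc s t, g x ≠ 0) (hs : 0 < g s) : 0 < g t := by
  rcases lt_trichotomy (g t) 0 with h | h | h
  · obtain ⟨c, hc, hc0⟩ := intermediate_value_Icc' hst hcont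
      (show (0:ℝ) ∈ Set.Icc (g t) (g s) from ⟨h.le, hs.le⟩)
    exact absurd hc0 (hnv c hc)
  · exact absurd h (hnv t ⟨hst, le_rfl⟩)
  · exact h

lemma const_of_hasDerivAt_zero {f : ℝ → ℝ} (h : ∀ x : ℝ, 0 < x → HasDerivAt f 0 x)
    {u v : ℝ} (hu : 0 < u) (huv : u ≤ v) : f v = f u := by
  have hcont : ContinuousOn f (Set.Icc u v) := fun t ht =>
    ((h t (lt_of_lt_of_le hu ht.1)).continuousAt).continuousWithinAt
  exact constant_of_has_deriv_right_zero hcont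
    (fun t ht => (h t (lt_of_lt_of_le hu ht.1)).hasDerivWithinAt) v ⟨huv, le_rfl⟩

lemma signA {u W : ℝ → ℝ}
    (hu_cont : ContinuousOn u (Set.Ici 0))
    (hu_diff : ∀ x : ℝ, 0 < x → DifferentiableAt ℝ u x)
    (hu'_cont : ContinuousOn (deriv u) (Set.Ioi 0))
    (h0 : 0 < u 0)
    (hlim : Tendsto u atTop (nhds 0))
    (hW : ∀ x : ℝ, 0 < x → (deriv u x)^2 = W x)
    (hWz : ∀ x : ℝ, 0 < x → (W x = 0 ↔ u x = 0)) :
    ∀ x : ℝ, 0 < x → deriv u x ≤ 0 := by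
  intro x0 hx0
  by_contra hcon
  push_neg at hcon
  have hune : u x0 ≠ 0 := by
    intro h
    have hw0 : W x0 = 0 := (hWz x0 hx0).2 h
    have := hW x0 hx0
    nlinarith
  rcases lt_or_gt_of_ne hune with hneg | hposu
  · -- u x0 < 0 : left argument
    set A := {x | x ∈ Set.Icc 0 x0 ∧ 0 ≤ u x} with hAdef
    have hA0 : (0:ℝ) ∈ A := ⟨⟨le_rfl, hx0.le⟩, h0.le⟩
    have hAne : A.Nonempty := ⟨0, hA0⟩
    have hAbdd : BddAbove A := ⟨x0, fun y hy => hy.1.2⟩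
    have hAclosed : IsClosed A := by
      have : A = Set.Icc 0 x0 ∩ u ⁻¹' (Set.Ici 0) := by
        ext y; simp [hAdef, Set.mem_Icc, and_assoc]
      rw [this]
      exact (hu_cont.mono (fun y hy => hy.1)).preimage_isClosed_of_isClosed
        isClosed_Icc isClosed_Ici
    set α := sSup A with hαdef
    have hαA : α ∈ A := hAclosed.csSup_mem hAne hAbdd
    have hα0 : 0 ≤ α := hαA.1.1
    have hαx0 : α ≤ x0 := hαA.1.2
    have hαlt : α < x0 := lt_of_le_of_ne hαx0 (by
      intro h; rw [h] at hαA; exact absurd hαA.2 (not_le.2 hneg))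
    have huα_le : u α ≤ 0 := by
      have htd : Tendsto u (𝓝[>] α) (𝓝 (u α)) := by
        have hcw : ContinuousWithinAt u (Set.Ici 0) α := hu_cont α hα0
        exact hcw.tendsto.mono_left
          (nhdsWithin_mono α (fun y hy => le_of_lt (lt_of_le_of_lt hα0 hy)))
      apply le_of_tendsto htd
      filter_upwards [Ioo_mem_nhdsGT_of_mem (⟨le_rfl, hαlt⟩ : α ∈ Set.Ico α x0)] with y hy
      by_contra hcon2
      push_neg at hcon2
      have : y ∈ A := ⟨⟨le_trans hα0 hy.1.le, hy.2.le⟩, hcon2.le⟩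
      exact absurd (le_csSup hAbdd this) (not_le.2 hy.1)
    have huα : u α = 0 := le_antisymm huα_le hαA.2
    have hαpos : 0 < α := by
      rcases eq_or_lt_of_le hα0 with h | h
      · exfalso; rw [← h] at huα; linarith
      · exact h
    have hderiv_pos : ∀ x, α < x → x ≤ x0 → 0 < deriv u x := by
      intro x hax hxx0
      have hx : 0 < x := lt_trans hαpos hax
      have hnv : ∀ y ∈ Set.Icc x x0, deriv u y ≠ 0 := by
        intro y hy hy0
        have hypos : 0 < y := lt_of_lt_of_le hx hy.1
        have huy_neg : u y < 0 := by
          have hyA : y ∉ A := fun hyA =>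
            absurd (le_csSup hAbdd hyA) (not_le.2 (lt_of_lt_of_le hax hy.1))
          by_contra hcon3
          push_neg at hcon3
          exact hyA ⟨⟨hypos.le, hy.2⟩, hcon3⟩
        have hWy : W y ≠ 0 := fun h => absurd ((hWz y hypos).1 h) (ne_of_lt huy_neg)
        exact hWy (by rw [← hW y hypos, hy0]; ring)
      exact ivt_pos_left hxx0
        (hu'_cont.mono (fun y hy => lt_of_lt_of_le hx hy.1)) hnv hcon
    have hmono : StrictMonoOn u (Set.Icc α x0) := by
      apply strictMonoOn_of_deriv_pos (convex_Icc _ _)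
      · exact hu_cont.mono (fun y hy => le_trans hα0 hy.1)
      · intro y hy
        rw [interior_Icc] at hy
        exact hderiv_pos y hy.1 hy.2.le
    have := hmono ⟨le_rfl, hαlt.le⟩ ⟨hαlt.le, le_rfl⟩ hαlt
    rw [huα] at this
    linarith
  · -- u x0 > 0 : right argument
    set S := {x | x0 ≤ x ∧ deriv u x ≤ 0} with hSdef
    by_cases hS : S.Nonempty
    · have hSbdd : BddBelow S := ⟨x0, fun y hy => hy.1⟩
      have hSclosed : IsClosed S := by
        have : S = Set.Ici x0 ∩ (deriv u) ⁻¹' (Set.Iic 0) := by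
          ext y; simp [hSdef]
        rw [this]
        exact (hu'_cont.mono (fun y (hy : x0 ≤ y) => lt_of_lt_of_le hx0 hy)).preimage_isClosed_of_isClosed
          isClosed_Ici isClosed_Iic
      set β := sInf S with hβdef
      have hβS : β ∈ S := hSclosed.csInf_mem hS hSbdd
      have hβ_ge : x0 ≤ β := hβS.1
      have hβpos : 0 < β := lt_of_lt_of_le hx0 hβ_ge
      have hx0β : x0 < β := lt_of_le_of_ne hβ_ge (by
        intro h; rw [← h] at hβS; exact absurd hβS.2 (not_le.2 hcon))
      have hlt' : ∀ y, x0 ≤ y → y < β → 0 < deriv u y := by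
        intro y h1 h2
        by_contra h3
        push_neg at h3
        exact absurd (csInf_le hSbdd ⟨h1, h3⟩) (not_le.2 h2)
      have hβderiv_ge : 0 ≤ deriv u β := by
        have htd : Tendsto (deriv u) (𝓝[<] β) (𝓝 (deriv u β)) :=
          ((hu'_cont.continuousAt (Ioi_mem_nhds hβpos)).tendsto).mono_left nhdsWithin_le_nhds
        apply ge_of_tendsto htd
        filter_upwards [Ioo_mem_nhdsLT_of_mem (⟨hx0β, le_rfl⟩ : β ∈ Set.Ioc x0 β)] with y hy
        exact (hlt' y hy.1.le hy.2).le
      have hβ0 : deriv u β = 0 := le_antisymm hβS.2 hβderiv_ge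
      have huβ : u β = 0 := (hWz β hβpos).1 (by rw [← hW β hβpos, hβ0]; ring)
      have hmono : StrictMonoOn u (Set.Icc x0 β) := by
        apply strictMonoOn_of_deriv_pos (convex_Icc _ _)
        · exact hu_cont.mono (fun y hy => le_trans hx0.le hy.1)
        · intro y hy
          rw [interior_Icc] at hy
          exact hlt' y hy.1.le hy.2
      have := hmono ⟨le_rfl, hx0β.le⟩ ⟨hx0β.le, le_rfl⟩ hx0β
      rw [huβ] at this
      linarith
    · rw [Set.not_nonempty_iff_eq_empty] at hS
      have hpos' : ∀ y, x0 ≤ y → 0 < deriv u y := by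
        intro y hy
        by_contra h
        push_neg at h
        have : y ∈ S := ⟨hy, h⟩
        rw [hS] at this
        exact this
      have hmono : StrictMonoOn u (Set.Ici x0) := by
        apply strictMonoOn_of_deriv_pos (convex_Ici _)
        · exact hu_cont.mono (fun y hy => le_trans hx0.le hy)
        · intro y hy
          rw [interior_Ici] at hy
          exact hpos' y hy.le
      have h1 : u x0 < u (x0+1) :=
        hmono Set.self_mem_Ici (Set.mem_Ici.2 (by linarith)) (by linarith)
      have h2 : u (x0+1) ≤ 0 := by
        apply ge_of_tendsto hlim
        filter_upwards [eventually_ge_atTop (x0+1)] with y hy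
        rcases eq_or_lt_of_le hy with h | h
        · rw [← h]
        · exact (hmono (Set.mem_Ici.2 (by linarith)) (Set.mem_Ici.2 (by linarith)) h).le
      linarith


lemma G_quad (hμ : 0 < μ) (hp3 : ContDiffOn ℝ 3 p (Set.Ioi 0)) (hρp : 0 < ρp)
    (hcomp : a * ρp = b * φp) :
    ∃ M : ℝ, 0 ≤ M ∧ ∀ s ∈ Set.Icc (ρp/2) (2*ρp),
      Gfun p μ a b ρp φp s ≤ M * (s - ρp)^2 := by
  set K := Set.Icc (ρp/2) (2*ρp) with hKdef
  have hKsub : K ⊆ Set.Ioi 0 := fun y hy => lt_of_lt_of_le (half_pos hρp) hy.1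
  have hρpK : ρp ∈ K := ⟨by linarith, by linarith⟩
  obtain ⟨C1, hC1⟩ := isCompact_Icc.exists_bound_of_continuousOn
    ((continuousOn_const.mul (f_contOn hμ hp3)).mono hKsub :
      ContinuousOn (fun τ => 2 * (deriv p τ / (μ * τ))) K)
  obtain ⟨C2, hC2⟩ := isCompact_Icc.exists_bound_of_continuousOn
    (((continuousOn_const.mul (f_contOn hμ hp3)).sub continuousOn_const).mono hKsub :
      ContinuousOn (fun τ => b * (deriv p τ / (μ * τ)) - a) K)
  have hC1nn : 0 ≤ C1 := le_trans (norm_nonneg _) (hC1 ρp hρpK)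
  have hC2nn : 0 ≤ C2 := le_trans (norm_nonneg _) (hC2 ρp hρpK)
  have hHlip : ∀ τ ∈ K, |Hfun p μ a b ρp φp τ| ≤ C2 * |τ - ρp| := by
    intro τ hτ
    have := Convex.norm_image_sub_le_of_norm_hasDerivWithin_le
      (f := Hfun p μ a b ρp φp) (f' := fun τ => b * (deriv p τ / (μ * τ)) - a) (s := K)
      (fun y hy => (hasDerivAt_H hμ hp3 hρp (hKsub hy)).hasDerivWithinAt)
      hC2 (convex_Icc _ _) hρpK hτ
    simpa [H_rhop (φp := φp) hcomp, Real.norm_eq_abs] using this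
  refine ⟨C1 * C2, mul_nonneg hC1nn hC2nn, ?_⟩
  intro s hs
  have hbound : ∀ τ ∈ Set.uIoc ρp s,
      ‖2 * (deriv p τ / (μ * τ)) * Hfun p μ a b ρp φp τ‖ ≤ C1 * C2 * |s - ρp| := by
    intro τ hτ
    have hτK : τ ∈ K := by
      rcases Set.mem_uIoc.1 hτ with h | h
      · exact ⟨by linarith [hρpK.1, h.1.le], le_trans h.2 hs.2⟩
      · exact ⟨by linarith [hs.1, h.1.le], le_trans h.2 hρpK.2⟩
    have habs : |τ - ρp| ≤ |s - ρp| := by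
      rcases Set.mem_uIoc.1 hτ with h | h
      · rw [abs_of_nonneg (by linarith : (0:ℝ) ≤ τ - ρp)]
        calc τ - ρp ≤ s - ρp := by linarith
        _ ≤ |s - ρp| := le_abs_self _
      · rw [abs_of_nonpos (by linarith : τ - ρp ≤ 0)]
        calc -(τ - ρp) ≤ -(s - ρp) := by linarith
        _ ≤ |s - ρp| := neg_le_abs _
    calc ‖2 * (deriv p τ / (μ * τ)) * Hfun p μ a b ρp φp τ‖
        = ‖2 * (deriv p τ / (μ * τ))‖ * |Hfun p μ a b ρp φp τ| := by
          rw [norm_mul]; rfl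
      _ ≤ C1 * (C2 * |τ - ρp|) :=
          mul_le_mul (hC1 τ hτK) (hHlip τ hτK) (abs_nonneg _) hC1nn
      _ ≤ C1 * (C2 * |s - ρp|) := by
          apply mul_le_mul_of_nonneg_left _ hC1nn
          exact mul_le_mul_of_nonneg_left habs hC2nn
      _ = C1 * C2 * |s - ρp| := by ring
  have hkey := intervalIntegral.norm_integral_le_of_norm_le_const hbound
  have : Gfun p μ a b ρp φp s ≤ C1 * C2 * |s - ρp| * |s - ρp| := by
    refine le_trans (le_abs_self _) ?_
    exact hkey
  calc Gfun p μ a b ρp φp s ≤ C1 * C2 * |s - ρp| * |s - ρp| := this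
    _ = C1 * C2 * (s - ρp)^2 := by rw [mul_assoc, ← abs_mul, ← pow_two, abs_pow, sq_abs]


lemma sigma_alg {σ g f h : ℝ} (hσσ : σ * σ = 1) (hg : g ≠ 0) (hf : f ≠ 0) :
    σ * (1 / (2*g) * (2 * f * h * (σ * g / f))) = h := by
  field_simp
  linear_combination h * hσσ

lemma G_nonneg (hμ : 0 < μ) (ha : 0 < a) (hb : 0 < b) (hp3 : ContDiffOn ℝ 3 p (Set.Ioi 0))
    (hp' : ∀ ρ : ℝ, 0 < ρ → a * μ / b * ρ < deriv p ρ) (hρp : 0 < ρp)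
    (hcomp : a * ρp = b * φp) {s : ℝ} (hs : 0 < s) :
    0 ≤ Gfun p μ a b ρp φp s := by
  rcases eq_or_ne s ρp with h | h
  · rw [h, G_rhop]
  · exact (G_pos hμ ha hb hp3 hp' hρp hcomp hs h).le

lemma G_eq_zero_iff (hμ : 0 < μ) (ha : 0 < a) (hb : 0 < b) (hp3 : ContDiffOn ℝ 3 p (Set.Ioi 0))
    (hp' : ∀ ρ : ℝ, 0 < ρ → a * μ / b * ρ < deriv p ρ) (hρp : 0 < ρp)
    (hcomp : a * ρp = b * φp) {s : ℝ} (hs : 0 < s) :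
    Gfun p μ a b ρp φp s = 0 ↔ s = ρp := by
  constructor
  · intro h
    by_contra hne
    exact absurd h (ne_of_gt (G_pos hμ ha hb hp3 hp' hρp hcomp hs hne))
  · intro h; rw [h, G_rhop]

lemma F_eq_zero_iff (hμ : 0 < μ) (ha : 0 < a) (hb : 0 < b) (hp3 : ContDiffOn ℝ 3 p (Set.Ioi 0))
    (hp' : ∀ ρ : ℝ, 0 < ρ → a * μ / b * ρ < deriv p ρ) (hρp : 0 < ρp)
    {s : ℝ} (hs : 0 < s) :
    Ffun p μ ρp s = 0 ↔ s = ρp := by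
  constructor
  · intro h
    exact (F_mono hμ ha hb hp3 hp' hρp).injOn hs (Set.mem_Ioi.2 hρp)
      (by rw [h, F_rhop])
  · intro h; rw [h, F_rhop]


lemma mvt_escape {φ : ℝ → ℝ} {s0 L : ℝ} (hs0 : 0 < s0)
    (hcont : ContinuousOn φ (Set.Ici 0))
    (hdiff : ∀ x : ℝ, 0 < x → DifferentiableAt ℝ φ x)
    (hlim : Tendsto φ atTop (nhds L))
    (hbnd : ∀ x : ℝ, 0 < x → s0 ≤ deriv φ x) : False := by
  have hev : ∀ᶠ y in atTop, φ y ≤ L + 1 :=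
    hlim.eventually (eventually_le_nhds (lt_add_one L))
  obtain ⟨X, hX⟩ := eventually_atTop.1 hev
  set x := max X 2 + max 0 ((L + 1 - φ 1) / s0) + 1 with hxdef
  have hm1 : (2:ℝ) ≤ max X 2 := le_max_right X 2
  have hm2 : (0:ℝ) ≤ max 0 ((L + 1 - φ 1) / s0) := le_max_left _ _
  have hm3 : (L + 1 - φ 1) / s0 ≤ max 0 ((L + 1 - φ 1) / s0) := le_max_right _ _
  have hx1 : 1 < x := by
    rw [hxdef]; linarith
  have hxX : X ≤ x := by
    have := le_max_left X 2
    rw [hxdef]; linarith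
  obtain ⟨c, hc, hslope⟩ := exists_hasDerivAt_eq_slope φ (deriv φ) hx1
    (hcont.mono (fun y hy => le_trans zero_le_one hy.1))
    (fun y hy => (hdiff y (lt_trans one_pos hy.1)).hasDerivAt)
  have hc0 : 0 < c := lt_trans one_pos hc.1
  have h2 := hbnd c hc0
  rw [hslope] at h2
  have hx1' : 0 < x - 1 := by linarith
  rw [le_div_iff₀ hx1'] at h2
  have h3 := hX x hxX
  have h5 : s0 * ((L + 1 - φ 1) / s0) = L + 1 - φ 1 := by field_simp
  have h6 : s0 * ((L + 1 - φ 1) / s0 + 1) ≤ s0 * (x - 1) := by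
    apply mul_le_mul_of_nonneg_left _ hs0.le
    rw [hxdef]; linarith
  rw [mul_add, h5, mul_one] at h6
  linarith

end Aux

/-- For a pair `(ρ̄, φ̄)` with `ρ̄ ∈ C¹([0,∞))`, `φ̄ ∈ C²([0,∞))` and `ρ̄ > 0`, being a
classical solution of the stationary problem is equivalent to solving the first-order
problem `ρ̄(0) = ρ₋`, `ρ̄ → ρ₊`, `φ̄ = F(ρ̄) + φ₊`, `ρ̄' = ∓√(G(ρ̄))/F'(ρ̄)`. -/
theorem stmt7 (p : ℝ → ℝ) (μ a b ρp φp φm ρm : ℝ)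
    (hμ : 0 < μ) (ha : 0 < a) (hb : 0 < b)
    (hp3 : ContDiffOn ℝ 3 p (Set.Ioi 0))
    (hp' : ∀ ρ : ℝ, 0 < ρ → a * μ / b * ρ < deriv p ρ)
    (hρp : 0 < ρp) (hφp : 0 < φp) (hcomp : a * ρp = b * φp)
    (hne : φm ≠ φp) (hint : CondPlus p μ ρp φp φm)
    (hρm : 0 < ρm) (hFρm : Ffun p μ ρp ρm = φm - φp)
    (ρb φb : ℝ → ℝ)
    (hreg1 : ContDiffOn ℝ 1 ρb (Set.Ici 0))
    (hreg2 : ContDiffOn ℝ 2 φb (Set.Ici 0))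
    (hpos : ∀ x : ℝ, 0 ≤ x → 0 < ρb x) :
    ((∀ x : ℝ, 0 < x → deriv (fun y => p (ρb y)) x = μ * ρb x * deriv φb x) ∧
     (∀ x : ℝ, 0 < x → deriv (deriv φb) x + a * ρb x - b * φb x = 0) ∧
     φb 0 = φm ∧
     Tendsto ρb atTop (nhds ρp) ∧ Tendsto φb atTop (nhds φp))
    ↔
    (ρb 0 = ρm ∧
     Tendsto ρb atTop (nhds ρp) ∧
     (∀ x : ℝ, 0 ≤ x → φb x = Ffun p μ ρp (ρb x) + φp) ∧
     (φp < φm → ∀ x : ℝ, 0 < x →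
        deriv ρb x =
          - Real.sqrt (Gfun p μ a b ρp φp (ρb x)) / (deriv p (ρb x) / (μ * ρb x))) ∧
     (φm < φp → ∀ x : ℝ, 0 < x →
        deriv ρb x =
          Real.sqrt (Gfun p μ a b ρp φp (ρb x)) / (deriv p (ρb x) / (μ * ρb x)))) := by
  -- shared regularity facts
  have hρd : ∀ x : ℝ, 0 < x → DifferentiableAt ℝ ρb x := fun x hx =>
    ((hreg1.mono Set.Ioi_subset_Ici_self).differentiableOn one_ne_zero).differentiableAt
      (Ioi_mem_nhds hx)
  have hφd : ∀ x : ℝ, 0 < x → DifferentiableAt ℝ φb x := fun x hx =>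
    ((hreg2.mono Set.Ioi_subset_Ici_self).differentiableOn (by norm_num)).differentiableAt
      (Ioi_mem_nhds hx)
  have hφ'C1 : ContDiffOn ℝ 1 (deriv φb) (Set.Ioi 0) :=
    (hreg2.mono Set.Ioi_subset_Ici_self).deriv_of_isOpen (m := 1) isOpen_Ioi (by norm_num)
  have hφ'd : ∀ x : ℝ, 0 < x → DifferentiableAt ℝ (deriv φb) x := fun x hx =>
    (hφ'C1.differentiableOn one_ne_zero).differentiableAt (Ioi_mem_nhds hx)
  have hφ'cont : ContinuousOn (deriv φb) (Set.Ioi 0) := hφ'C1.continuousOn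
  have hρcont : ContinuousOn ρb (Set.Ici 0) := hreg1.continuousOn
  have hφcont : ContinuousOn φb (Set.Ici 0) := hreg2.continuousOn
  have hpdiff : ∀ s : ℝ, 0 < s → DifferentiableAt ℝ p s := fun s hs =>
    ((hp3.differentiableOn (by norm_num)).differentiableAt (Ioi_mem_nhds hs))
  have hfne : ∀ s : ℝ, 0 < s → deriv p s / (μ * s) ≠ 0 := fun s hs =>
    (fpos' hμ ha hb hp' hs).ne'
  have hchain : ∀ x : ℝ, 0 < x →
      deriv (fun y => p (ρb y)) x = deriv p (ρb x) * deriv ρb x := fun x hx =>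
    (((hpdiff _ (hpos x hx.le)).hasDerivAt).comp x (hρd x hx).hasDerivAt).deriv
  have hFchain : ∀ x : ℝ, 0 < x →
      HasDerivAt (fun y => Ffun p μ ρp (ρb y))
        ((deriv p (ρb x) / (μ * ρb x)) * deriv ρb x) x := fun x hx =>
    (hasDerivAt_F hμ hp3 hρp (hpos x hx.le)).comp x (hρd x hx).hasDerivAt
  have hGchain : ∀ x : ℝ, 0 < x →
      HasDerivAt (fun y => Gfun p μ a b ρp φp (ρb y))
        ((2 * (deriv p (ρb x) / (μ * ρb x)) * Hfun p μ a b ρp φp (ρb x)) * deriv ρb x) x :=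
    fun x hx =>
    (hasDerivAt_G hμ hp3 hρp (hpos x hx.le)).comp x (hρd x hx).hasDerivAt
  have hFcontρp : ContinuousAt (Ffun p μ ρp) ρp := (hasDerivAt_F hμ hp3 hρp hρp).continuousAt
  have hGcontρp : ContinuousAt (Gfun p μ a b ρp φp) ρp :=
    (hasDerivAt_G hμ hp3 hρp hρp).continuousAt
  constructor
  · rintro ⟨heq1, heq2, hφ0, hρlim, hφlim⟩
    have hφ' : ∀ x : ℝ, 0 < x →
        deriv φb x = (deriv p (ρb x) / (μ * ρb x)) * deriv ρb x := by
      intro x hx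
      have h1 := heq1 x hx
      rw [hchain x hx] at h1
      have hμρ : μ * ρb x ≠ 0 := (mul_pos hμ (hpos x hx.le)).ne'
      have hρx0 : ρb x ≠ 0 := (hpos x hx.le).ne'
      field_simp
      linarith [h1]
    have hψ : ∀ x : ℝ, 0 < x →
        HasDerivAt (fun y => φb y - Ffun p μ ρp (ρb y)) 0 x := by
      intro x hx
      have h := ((hφd x hx).hasDerivAt).sub (hFchain x hx)
      have h0 : deriv φb x - (deriv p (ρb x) / (μ * ρb x)) * deriv ρb x = 0 := by
        rw [hφ' x hx]; ring
      rwa [h0] at h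
    have hψeq : ∀ x : ℝ, 0 < x →
        φb x - Ffun p μ ρp (ρb x) = φb 1 - Ffun p μ ρp (ρb 1) := by
      intro x hx
      rcases le_total x 1 with h | h
      · exact (const_of_hasDerivAt_zero hψ hx h).symm
      · exact const_of_hasDerivAt_zero hψ one_pos h
    have hFlim : Tendsto (fun y => Ffun p μ ρp (ρb y)) atTop (nhds 0) := by
      have h1 := hFcontρp.tendsto.comp hρlim
      rwa [F_rhop] at h1
    have hψlim : Tendsto (fun y => φb y - Ffun p μ ρp (ρb y)) atTop (nhds φp) := by
      have h := hφlim.sub hFlim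
      simpa using h
    have hψ1 : φb 1 - Ffun p μ ρp (ρb 1) = φp := by
      have h2 : Tendsto (fun y => φb y - Ffun p μ ρp (ρb y)) atTop
          (nhds (φb 1 - Ffun p μ ρp (ρb 1))) := by
        apply Tendsto.congr' _ tendsto_const_nhds
        filter_upwards [eventually_gt_atTop 0] with y hy
        exact (hψeq y hy).symm
      exact tendsto_nhds_unique h2 hψlim
    have hφF : ∀ x : ℝ, 0 ≤ x → φb x = Ffun p μ ρp (ρb x) + φp := by
      intro x hx
      rcases eq_or_lt_of_le hx with h | h
      · have hcw : ContinuousWithinAt (fun y => φb y - Ffun p μ ρp (ρb y)) (Set.Ici 0) 0 := by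
          apply (hφcont 0 Set.self_mem_Ici).sub
          exact ((hasDerivAt_F hμ hp3 hρp (hpos 0 le_rfl)).continuousAt).comp_continuousWithinAt
            (hρcont 0 Set.self_mem_Ici)
        have htd : Tendsto (fun y => φb y - Ffun p μ ρp (ρb y)) (𝓝[>] 0)
            (nhds (φb 0 - Ffun p μ ρp (ρb 0))) :=
          (hcw.tendsto).mono_left (nhdsWithin_mono 0 Set.Ioi_subset_Ici_self)
        have htd2 : Tendsto (fun y => φb y - Ffun p μ ρp (ρb y)) (𝓝[>] 0) (nhds φp) := by
          apply Tendsto.congr' _ tendsto_const_nhds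
          filter_upwards [self_mem_nhdsWithin] with y hy
          exact ((hψeq y hy).trans hψ1).symm
        have hkey := tendsto_nhds_unique htd htd2
        rw [← h] at *
        linarith
      · have hkey := (hψeq x h).trans hψ1
        linarith
    have hρ0 : ρb 0 = ρm := by
      have h1 : Ffun p μ ρp (ρb 0) = φm - φp := by
        have h2 := hφF 0 le_rfl
        rw [hφ0] at h2
        linarith
      exact (F_mono hμ ha hb hp3 hp' hρp).injOn (Set.mem_Ioi.2 (hpos 0 le_rfl))
        (Set.mem_Ioi.2 hρm) (by rw [h1, hFρm])
    have hφ'' : ∀ x : ℝ, 0 < x →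
        deriv (deriv φb) x = Hfun p μ a b ρp φp (ρb x) := by
      intro x hx
      have h := heq2 x hx
      have h3 : b * φb x = b * Ffun p μ ρp (ρb x) + b * φp := by
        rw [hφF x hx.le]; ring
      unfold Hfun
      linarith
    set E1 : ℝ := (deriv φb 1)^2 - Gfun p μ a b ρp φp (ρb 1) with hE1def
    have hEderiv : ∀ x : ℝ, 0 < x →
        HasDerivAt (fun y => (deriv φb y)^2 - Gfun p μ a b ρp φp (ρb y)) 0 x := by
      intro x hx
      have h1 : HasDerivAt (fun y => (deriv φb y)^2)
          (2 * deriv φb x * deriv (deriv φb) x) x := by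
        have h := ((hφ'd x hx).hasDerivAt).pow 2
        exact h.congr_deriv (by norm_num)
      have h2 := h1.sub (hGchain x hx)
      have h0 : 2 * deriv φb x * deriv (deriv φb) x -
          2 * (deriv p (ρb x) / (μ * ρb x)) * Hfun p μ a b ρp φp (ρb x) * deriv ρb x = 0 := by
        rw [hφ'' x hx, hφ' x hx]; ring
      rwa [h0] at h2
    have hEeq : ∀ x : ℝ, 0 < x →
        (deriv φb x)^2 - Gfun p μ a b ρp φp (ρb x) = E1 := by
      intro x hx
      rcases le_total x 1 with h | h
      · exact (const_of_hasDerivAt_zero hEderiv hx h).symm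
      · exact const_of_hasDerivAt_zero hEderiv one_pos h
    have hGlim : Tendsto (fun y => Gfun p μ a b ρp φp (ρb y)) atTop (nhds 0) := by
      have h1 := hGcontρp.tendsto.comp hρlim
      rwa [G_rhop] at h1
    have hsqlim : Tendsto (fun y => (deriv φb y)^2) atTop (nhds E1) := by
      have h1 : Tendsto (fun y => E1 + Gfun p μ a b ρp φp (ρb y)) atTop (nhds (E1 + 0)) :=
        tendsto_const_nhds.add hGlim
      rw [add_zero] at h1
      apply h1.congr'
      filter_upwards [eventually_gt_atTop 0] with y hy
      have := hEeq y hy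
      linarith
    have hE1nn : 0 ≤ E1 :=
      ge_of_tendsto hsqlim (Eventually.of_forall (fun y => sq_nonneg _))
    have hE1le : E1 ≤ 0 := by
      by_contra hcon
      push_neg at hcon
      have hs0 : 0 < Real.sqrt E1 := Real.sqrt_pos.2 hcon
      have hsq_ge : ∀ x : ℝ, 0 < x → E1 ≤ (deriv φb x)^2 := by
        intro x hx
        have h1 := hEeq x hx
        have h2 := G_nonneg hμ ha hb hp3 hp' hρp hcomp (hpos x hx.le)
        linarith
      have hφ'ne : ∀ x : ℝ, 0 < x → deriv φb x ≠ 0 := by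
        intro x hx h
        have h1 := hsq_ge x hx
        rw [h] at h1
        norm_num at h1
        linarith
      have hroot : ∀ x : ℝ, 0 < x → Real.sqrt E1 ≤ |deriv φb x| := by
        intro x hx
        rw [← Real.sqrt_sq_eq_abs]
        exact Real.sqrt_le_sqrt (hsq_ge x hx)
      rcases lt_or_gt_of_ne (hφ'ne 1 one_pos) with hneg1 | hpos1
      · -- deriv φb < 0 everywhere ⇒ -φb escapes
        have hall : ∀ x : ℝ, 0 < x → deriv φb x < 0 := by
          intro x hx
          have hgoal : 0 < -(deriv φb x) := by
            rcases le_total x 1 with h | h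
            · apply ivt_pos_left (g := fun y => -(deriv φb y)) h
                ((hφ'cont.mono (fun y hy => lt_of_lt_of_le hx hy.1)).neg)
                (fun y hy h0 => hφ'ne y (lt_of_lt_of_le hx hy.1) (by simpa using h0))
                (by show (0:ℝ) < -(deriv φb 1); linarith)
            · apply ivt_pos_right (g := fun y => -(deriv φb y)) h
                ((hφ'cont.mono (fun y hy => lt_of_lt_of_le one_pos hy.1)).neg)
                (fun y hy h0 => hφ'ne y (lt_of_lt_of_le one_pos hy.1)
                  (by simpa using h0))
                (by show (0:ℝ) < -(deriv φb 1); linarith)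
          linarith
        apply mvt_escape (φ := fun y => -(φb y)) (s0 := Real.sqrt E1) (L := -φp) hs0
          (hφcont.neg)
          (fun x hx => (hφd x hx).neg)
          (hφlim.neg)
        intro x hx
        have h1 := hroot x hx
        rw [abs_of_neg (hall x hx)] at h1
        rw [show deriv (fun y => -φb y) x = -deriv φb x from deriv.neg]
        linarith
      · have hall : ∀ x : ℝ, 0 < x → 0 < deriv φb x := by
          intro x hx
          rcases le_total x 1 with h | h
          · exact ivt_pos_left h (hφ'cont.mono (fun y hy => lt_of_lt_of_le hx hy.1))
              (fun y hy => hφ'ne y (lt_of_lt_of_le hx hy.1)) hpos1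
          · exact ivt_pos_right h (hφ'cont.mono (fun y hy => lt_of_lt_of_le one_pos hy.1))
              (fun y hy => hφ'ne y (lt_of_lt_of_le one_pos hy.1)) hpos1
        apply mvt_escape (φ := φb) (s0 := Real.sqrt E1) (L := φp) hs0 hφcont hφd hφlim
        intro x hx
        have h1 := hroot x hx
        rw [abs_of_pos (hall x hx)] at h1
        linarith
    have hE1 : E1 = 0 := le_antisymm hE1le hE1nn
    have hEnergy : ∀ x : ℝ, 0 < x → (deriv φb x)^2 = Gfun p μ a b ρp φp (ρb x) := by
      intro x hx
      have h := hEeq x hx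
      rw [hE1] at h
      linarith
    have hWz : ∀ y : ℝ, 0 < y → (Gfun p μ a b ρp φp (ρb y) = 0 ↔ φb y - φp = 0) := by
      intro y hy
      constructor
      · intro h
        have hρy : ρb y = ρp :=
          (G_eq_zero_iff hμ ha hb hp3 hp' hρp hcomp (hpos y hy.le)).1 h
        rw [hφF y hy.le, hρy, F_rhop]
        ring
      · intro h
        have h1 : Ffun p μ ρp (ρb y) = 0 := by
          have h2 := hφF y hy.le
          linarith
        have hρy : ρb y = ρp := (F_eq_zero_iff hμ ha hb hp3 hp' hρp (hpos y hy.le)).1 h1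
        rw [hρy, G_rhop]
    refine ⟨hρ0, hρlim, hφF, ?_, ?_⟩
    · -- φp < φm : deriv ρb = -√G / f
      intro hpm x hx
      have hueq : (deriv fun y => φb y - φp) = deriv φb := by
        ext y
        exact deriv_sub_const φp
      have key := signA (u := fun y => φb y - φp) (W := fun y => Gfun p μ a b ρp φp (ρb y))
        (hφcont.sub continuousOn_const)
        (fun y hy => (hφd y hy).sub_const φp)
        (by rw [hueq]; exact hφ'cont)
        (by show (0:ℝ) < φb 0 - φp; rw [hφ0]; linarith)
        (by simpa using hφlim.sub_const φp)
        (fun y hy => by rw [hueq]; exact hEnergy y hy)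
        hWz
      have hle : deriv φb x ≤ 0 := by
        have h := key x hx
        rwa [hueq] at h
      have hsqx : Real.sqrt (Gfun p μ a b ρp φp (ρb x)) = -deriv φb x := by
        rw [← hEnergy x hx, Real.sqrt_sq_eq_abs, abs_of_nonpos hle]
      have hfx := hfne _ (hpos x hx.le)
      have hμρ : μ * ρb x ≠ 0 := (mul_pos hμ (hpos x hx.le)).ne'
      have hdp : deriv p (ρb x) ≠ 0 := fun hc => hfx (by rw [hc]; simp)
      have hρx0 : ρb x ≠ 0 := (hpos x hx.le).ne'
      rw [hsqx, hφ' x hx]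
      field_simp
    · -- φm < φp : deriv ρb = √G / f
      intro hmp x hx
      have hueq : (deriv fun y => φp - φb y) = fun y => -deriv φb y := by
        ext y
        exact deriv_const_sub φp
      have key := signA (u := fun y => φp - φb y) (W := fun y => Gfun p μ a b ρp φp (ρb y))
        (continuousOn_const.sub hφcont)
        (fun y hy => (differentiableAt_const φp).sub (hφd y hy))
        (by rw [hueq]; exact hφ'cont.neg)
        (by show (0:ℝ) < φp - φb 0; rw [hφ0]; linarith)
        (by simpa using hφlim.const_sub φp)
        (fun y hy => by rw [hueq]; simpa [neg_sq] using hEnergy y hy)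
        (fun y hy => by rw [show φp - φb y = -(φb y - φp) by ring]
                        rw [neg_eq_zero]
                        exact hWz y hy)
      have hge : 0 ≤ deriv φb x := by
        have h := key x hx
        rw [hueq] at h
        simpa using h
      have hsqx : Real.sqrt (Gfun p μ a b ρp φp (ρb x)) = deriv φb x := by
        rw [← hEnergy x hx, Real.sqrt_sq_eq_abs, abs_of_nonneg hge]
      have hfx := hfne _ (hpos x hx.le)
      have hμρ : μ * ρb x ≠ 0 := (mul_pos hμ (hpos x hx.le)).ne'
      have hdp : deriv p (ρb x) ≠ 0 := fun hc => hfx (by rw [hc]; simp)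
      have hρx0 : ρb x ≠ 0 := (hpos x hx.le).ne'
      rw [hsqx, hφ' x hx]
      field_simp
  · rintro ⟨hρ0, hρlim, hφF, hODEm, hODEp⟩
    obtain ⟨σ, hσ, hder⟩ : ∃ σ : ℝ, (σ = 1 ∨ σ = -1) ∧ ∀ x : ℝ, 0 < x →
        deriv ρb x = σ * Real.sqrt (Gfun p μ a b ρp φp (ρb x)) /
          (deriv p (ρb x) / (μ * ρb x)) := by
      rcases hne.lt_or_gt with hmp | hpm
      · exact ⟨1, Or.inl rfl, fun x hx => by rw [hODEp hmp x hx]; ring⟩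
      · exact ⟨-1, Or.inr rfl, fun x hx => by rw [hODEm hpm x hx]; ring⟩
    have hσσ : σ * σ = 1 := by rcases hσ with h | h <;> rw [h] <;> norm_num
    have hσabs : |σ| = 1 := by rcases hσ with h | h <;> rw [h] <;> norm_num
    have hφ' : ∀ x : ℝ, 0 < x →
        deriv φb x = (deriv p (ρb x) / (μ * ρb x)) * deriv ρb x := by
      intro x hx
      have hev : φb =ᶠ[𝓝 x] (fun y => Ffun p μ ρp (ρb y) + φp) := by
        filter_upwards [Ioi_mem_nhds hx] with y hy
        exact hφF y (le_of_lt hy)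
      rw [hev.deriv_eq]
      exact ((hFchain x hx).add_const φp).deriv
    have hφ'eq : ∀ x : ℝ, 0 < x →
        deriv φb x = σ * Real.sqrt (Gfun p μ a b ρp φp (ρb x)) := by
      intro x hx
      rw [hφ' x hx, hder x hx]
      have hμρ : μ * ρb x ≠ 0 := (mul_pos hμ (hpos x hx.le)).ne'
      have hdp : deriv p (ρb x) ≠ 0 := by
        have h := hfne _ (hpos x hx.le)
        exact fun hc => h (by rw [hc]; simp)
      have hρx0 : ρb x ≠ 0 := (hpos x hx.le).ne'
      field_simp
    refine ⟨?_, ?_, ?_, hρlim, ?_⟩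
    · -- first equation
      intro x hx
      rw [hchain x hx, hφ' x hx]
      have h1 : μ * ρb x ≠ 0 := (mul_pos hμ (hpos x hx.le)).ne'
      have hρx0 : ρb x ≠ 0 := (hpos x hx.le).ne'
      field_simp
    · -- second equation
      intro x hx
      have hρbx := hpos x hx.le
      by_cases hxρ : ρb x = ρp
      · have hG0 : Gfun p μ a b ρp φp (ρb x) = 0 := by rw [hxρ, G_rhop]
        have hρ'0 : deriv ρb x = 0 := by
          rw [hder x hx, hG0, Real.sqrt_zero, mul_zero, zero_div]
        have hd2 : HasDerivAt (deriv φb) 0 x := by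
          obtain ⟨M, hMnn, hMb⟩ := G_quad (a := a) (b := b) (φp := φp) hμ hp3 hρp hcomp
          have h0 : deriv φb x = 0 := by
            rw [hφ'eq x hx, hG0, Real.sqrt_zero, mul_zero]
          rw [hasDerivAt_iff_isLittleO, h0]
          have hBig : (fun y => deriv φb y) =O[𝓝 x] (fun y => ρb y - ρb x) := by
            rw [Asymptotics.isBigO_iff]
            refine ⟨Real.sqrt M, ?_⟩
            have hev2 : ∀ᶠ y in 𝓝 x, ρb y ∈ Set.Ioo (ρp/2) (2*ρp) := by
              apply (hρd x hx).continuousAt.eventually_mem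
              rw [hxρ]
              exact isOpen_Ioo.mem_nhds ⟨by linarith, by linarith⟩
            filter_upwards [eventually_gt_nhds hx, hev2] with y hy1 hy2
            have hGle : Gfun p μ a b ρp φp (ρb y) ≤ M * (ρb y - ρp)^2 :=
              hMb _ ⟨hy2.1.le, hy2.2.le⟩
            have hGnn : 0 ≤ Gfun p μ a b ρp φp (ρb y) :=
              G_nonneg hμ ha hb hp3 hp' hρp hcomp (hpos y hy1.le)
            calc ‖deriv φb y‖ = Real.sqrt (Gfun p μ a b ρp φp (ρb y)) := by
                  rw [hφ'eq y hy1, Real.norm_eq_abs, abs_mul, hσabs, one_mul,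
                    abs_of_nonneg (Real.sqrt_nonneg _)]
              _ ≤ Real.sqrt (M * (ρb y - ρp)^2) := Real.sqrt_le_sqrt hGle
              _ = Real.sqrt M * |ρb y - ρp| := by
                  rw [Real.sqrt_mul hMnn, Real.sqrt_sq_eq_abs]
              _ = Real.sqrt M * ‖ρb y - ρb x‖ := by rw [hxρ, Real.norm_eq_abs]
          have hLit : (fun y => ρb y - ρb x) =o[𝓝 x] (fun y => y - x) := by
            have h := (hρd x hx).hasDerivAt
            rw [hρ'0] at h
            have h2 := hasDerivAt_iff_isLittleO.1 h
            simpa using h2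
          simpa using hBig.trans_isLittleO hLit
        rw [hd2.deriv]
        have hφx : φb x = φp := by rw [hφF x hx.le, hxρ, F_rhop]; ring
        rw [hφx, hxρ]; linarith
      · have hGpos : 0 < Gfun p μ a b ρp φp (ρb x) :=
          G_pos hμ ha hb hp3 hp' hρp hcomp hρbx hxρ
        have hsqrt := Real.hasDerivAt_sqrt hGpos.ne'
        have hcomp1 := hsqrt.comp x (hGchain x hx)
        have hd2 := (hcomp1.const_mul σ).congr_of_eventuallyEq (by
          filter_upwards [Ioi_mem_nhds hx] with y hy
          exact hφ'eq y hy)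
        have hsne : Real.sqrt (Gfun p μ a b ρp φp (ρb x)) ≠ 0 :=
          (Real.sqrt_pos.2 hGpos).ne'
        have hfne' := hfne _ hρbx
        have hval : σ * (1 / (2 * Real.sqrt (Gfun p μ a b ρp φp (ρb x))) *
            (2 * (deriv p (ρb x) / (μ * ρb x)) * Hfun p μ a b ρp φp (ρb x) * deriv ρb x))
            = Hfun p μ a b ρp φp (ρb x) := by
          rw [hder x hx]
          exact sigma_alg hσσ hsne hfne'
        rw [hd2.deriv, hval, hφF x hx.le]
        unfold Hfun
        ring
    · -- φb 0 = φm
      rw [hφF 0 le_rfl, hρ0, hFρm]; ring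
    · -- Tendsto φb
      have h1 : Tendsto (fun y => Ffun p μ ρp (ρb y)) atTop (𝓝 (Ffun p μ ρp ρp)) :=
        hFcontρp.tendsto.comp hρlim
      rw [F_rhop] at h1
      have h2 : Tendsto (fun y => Ffun p μ ρp (ρb y) + φp) atTop (𝓝 (0 + φp)) :=
        h1.add_const φp
      rw [zero_add] at h2
      apply h2.congr'
      filter_upwards [eventually_ge_atTop 0] with y hy
      exact (hφF y hy).symm

end
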